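/- Let m ≥ 2 and k be positive integers with gcd(k,m) = 1, and let α, β ∈ F_{2^m} with β ≠ 0. Then the Taniguchi function f_{k,α,β} on F_{2^m} × F_{2^m} is almost perfect nonlinear if and only if the polynomial X^{2^k+1} + αX + β ∈ F_{2^m}[X] has no root in F_{2^m}. -/

import Mathlib

/-- A function `F` on a finite field of characteristic 2 is almost perfect nonlinear (APN)
if for every nonzero `a` and every `b`, the equation `F (x + a) + F x = b` has exactly
0 or 2 solutions `x`. -/
def IsAPN {G : Type*} [AddCommGroup G] (F : G → G) : Prop :=
  ∀ a : G, a ≠ 0 → ∀ b : G,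
    {x : G | F (x + a) + F x = b}.ncard = 0 ∨ {x : G | F (x + a) + F x = b}.ncard = 2

/-- The Taniguchi function `f_{k,α,β}` on `K × K`. -/
def taniguchi {K : Type*} [Field K] (k : ℕ) (α β : K) : K × K → K × K :=
  fun p => (p.1 ^ (2 ^ (2 * k) * (2 ^ k + 1)) + α * p.1 ^ (2 ^ (2 * k)) * p.2 ^ (2 ^ k)
      + β * p.2 ^ (2 ^ k + 1), p.1 * p.2)

section
variable {K : Type*} [Field K] [CharP K 2] [Finite K]

lemma pow_two_pow_mul {M : Type*} [Monoid M] (t : M) (n : ℕ) (ht : t^(2^n) = t) :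
    ∀ j : ℕ, t^(2^(n*j)) = t := by
  intro j
  induction j with
  | zero => simp
  | succ j ih =>
    have h : 2^(n*(j+1)) = 2^(n*j) * 2^n := by rw [← pow_add]; ring_nf
    rw [h, pow_mul, ih, ht]

lemma bezout_pow (k m : ℕ) (hm : 2 ≤ m) (hgcd : Nat.gcd k m = 1) :
    ∃ u v : ℕ, k * u = m * v + 1 := by
  have hφ : 1 ≤ Nat.totient m := Nat.totient_pos.2 (by omega)
  have h : k ^ Nat.totient m ≡ 1 [MOD m] := Nat.ModEq.pow_totient hgcd
  refine ⟨k ^ (Nat.totient m - 1), k ^ Nat.totient m / m, ?_⟩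
  have hku : k * k ^ (Nat.totient m - 1) = k ^ Nat.totient m := by
    rw [← pow_succ']; congr 1; omega
  rw [hku]
  have h2 : k ^ Nat.totient m % m = 1 % m := h
  rw [Nat.one_mod_eq_one.2 (by omega)] at h2
  have := Nat.div_add_mod (k ^ Nat.totient m) m
  omega

omit [CharP K 2] in
lemma fixed01 (k m : ℕ) (hm : 2 ≤ m)
    (hgcd : Nat.gcd k m = 1) (hcard : Nat.card K = 2^m) (t : K) (ht : t^(2^k) = t) :
    t = 0 ∨ t = 1 := by
  obtain ⟨u, v, huv⟩ := bezout_pow k m hm hgcd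
  have hmfix : t^(2^m) = t := by
    have : Fintype K := Fintype.ofFinite _
    rw [← hcard, Nat.card_eq_fintype_card]
    exact FiniteField.pow_card t
  have h1 : t^(2^(k*u)) = t := pow_two_pow_mul t k ht u
  have h2 : t^(2^(m*v)) = t := pow_two_pow_mul t m hmfix v
  have h3 : t^2 = t := by
    have h4 : t^(2^(m*v+1)) = t^2 := by rw [pow_succ, pow_mul, h2]
    rw [← h4, ← huv, h1]
  rcases mul_eq_zero.1 (show t*(t-1) = 0 by linear_combination h3) with h | h
  · exact Or.inl h
  · exact Or.inr (by linear_combination h)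

omit [Finite K] in
lemma frob_add (x y : K) (n : ℕ) : (x+y)^(2^n) = x^(2^n)+y^(2^n) :=
  add_pow_char_pow x y 2 n

omit [CharP K 2] [Finite K] in
lemma pow_pow_sum (x : K) (i j : ℕ) : (x^(2^i))^(2^j) = x^(2^(i+j)) := by
  rw [← pow_mul, ← pow_add]

lemma kernel_lemma (m k : ℕ) (hm : 2 ≤ m) (hk : 0 < k)
    (hgcd : Nat.gcd k m = 1) (hcard : Nat.card K = 2 ^ m) (α β : K) (hβ : β ≠ 0)
    (hroot : ∀ x : K, x ^ (2^k+1) + α * x + β ≠ 0)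
    (a b dx dy : K) (hab : ¬(a = 0 ∧ b = 0))
    (hL2 : a*dy + b*dx = 0)
    (hL1 : dx^(2^(3*k)) * a^(2^(2*k)) + a^(2^(3*k)) * dx^(2^(2*k))
        + α*(dx^(2^(2*k)) * b^(2^k) + a^(2^(2*k)) * dy^(2^k)) + β*(dy^(2^k)*b + b^(2^k)*dy) = 0) :
    (dx = 0 ∧ dy = 0) ∨ (dx = a ∧ dy = b) := by
  have h2 : (2:K) = 0 := CharTwo.two_eq_zero
  by_cases ha : a = 0
  · have hb : b ≠ 0 := fun hb0 => hab ⟨ha, hb0⟩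
    subst ha
    have hdx : dx = 0 := by
      have : b * dx = 0 := by linear_combination hL2
      exact (mul_eq_zero.1 this).resolve_left hb
    subst hdx
    have hsum : dy^(2^k)*b + b^(2^k)*dy = 0 := by
      have hβ' := hL1
      simp only [zero_pow (by positivity : (2:ℕ)^(3*k) ≠ 0),
        zero_pow (by positivity : (2:ℕ)^(2*k) ≠ 0), zero_mul, mul_zero, add_zero, zero_add] at hβ'
      exact (mul_eq_zero.1 hβ').resolve_left hβ
    set w := dy * b⁻¹ with hw
    have hdy : dy = w * b := by rw [hw, mul_assoc, inv_mul_cancel₀ hb, mul_one]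
    have hwq : w^(2^k) = w := by
      have h5 : (w^(2^k) - w) * (b^(2^k)*b) = 0 := by
        rw [hdy] at hsum
        simp only [mul_pow] at hsum
        linear_combination hsum - w*b^(2^k)*b*h2
      have h6 : (b:K)^(2^k)*b ≠ 0 := mul_ne_zero (pow_ne_zero _ hb) hb
      have := (mul_eq_zero.1 h5).resolve_right h6
      linear_combination this
    rcases fixed01 k m hm hgcd hcard w hwq with h | h
    · exact Or.inl ⟨rfl, by rw [hdy, h, zero_mul]⟩
    · exact Or.inr ⟨rfl, by rw [hdy, h, one_mul]⟩
  · -- a ≠ 0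
    set t := dx * a⁻¹ with htdef
    have hdx : dx = a * t := by rw [htdef, mul_comm, mul_assoc, inv_mul_cancel₀ ha, mul_one]
    have hdy : dy = b * t := by
      have h5 : a * dy = a * (b * t) := by
        rw [hdx] at hL2; linear_combination hL2 - b*a*t*h2
      exact mul_left_cancel₀ ha h5
    set s := t^(2^k) + t with hs
    have hs1 : s^(2^k) = t^(2^(2*k)) + t^(2^k) := by
      rw [hs, frob_add, pow_pow_sum, show k+k = 2*k by omega]
    have hs2 : s^(2^(2*k)) = t^(2^(3*k)) + t^(2^(2*k)) := by
      rw [hs, frob_add, pow_pow_sum, show k+2*k = 3*k by omega]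
    rw [hdx, hdy] at hL1
    simp only [mul_pow] at hL1
    have E : a^(2^(3*k))*a^(2^(2*k))*s^(2^(2*k)) + α*a^(2^(2*k))*b^(2^k)*s^(2^k)
        + β*b^(2^k)*b*s = 0 := by
      linear_combination hL1 + a^(2^(3*k))*a^(2^(2*k))*hs2 + α*a^(2^(2*k))*b^(2^k)*hs1
        + β*b^(2^k)*b*hs
    by_cases hsz : s = 0
    · have ht01 : t^(2^k) = t := by
        rw [hsz] at hs; linear_combination hs.symm - t*h2
      rcases fixed01 k m hm hgcd hcard t ht01 with h | h
      · exact Or.inl ⟨by rw [hdx, h, mul_zero], by rw [hdy, h, mul_zero]⟩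
      · exact Or.inr ⟨by rw [hdx, h, mul_one], by rw [hdy, h, mul_one]⟩
    · exfalso
      have hb : b ≠ 0 := by
        intro hb0
        rw [hb0] at E
        simp only [zero_pow (by positivity : (2:ℕ)^k ≠ 0), mul_zero, zero_mul,
          add_zero] at E
        have h6 : a^(2^(3*k))*a^(2^(2*k)) ≠ 0 :=
          mul_ne_zero (pow_ne_zero _ ha) (pow_ne_zero _ ha)
        have h7 := (mul_eq_zero.1 E).resolve_left h6
        exact hsz (pow_eq_zero_iff (by positivity) |>.1 h7)
      set r := s^(2^k - 1) with hr
      have hrs : r*s = s^(2^k) := by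
        rw [hr, ← pow_succ]; congr 1
        have := Nat.one_le_two_pow (n := k); omega
      have hr2 : r^(2^k)*s^(2^k) = s^(2^(2*k)) := by
        rw [hr, ← pow_mul, ← pow_add]; congr 1
        have h1 : 1 ≤ 2^k := Nat.one_le_two_pow
        have h8 : (2^k-1)*2^k = 2^k*2^k - 2^k := by rw [Nat.sub_mul, one_mul]
        have h9 : 2^k ≤ 2^k*2^k := Nat.le_mul_of_pos_left _ (by positivity)
        have h10 : (2:ℕ)^k*2^k = 2^(2*k) := by rw [← pow_add]; ring_nf
        omega
      set X := a^(2^(2*k)) * r * b⁻¹ with hX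
      have hXb : X*b = a^(2^(2*k))*r := by rw [hX]; field_simp
      have hXq : X^(2^k)*b^(2^k) = a^(2^(3*k))*r^(2^k) := by
        have h11 : (X*b)^(2^k) = (a^(2^(2*k))*r)^(2^k) := by rw [hXb]
        simp only [mul_pow, pow_pow_sum] at h11
        rw [show 2*k+k = 3*k by omega] at h11
        exact h11
      apply hroot X
      have hprod : (X^(2^k)*X + α*X + β) * (b^(2^k)*b*s) = 0 := by
        linear_combination E + s*X*b*hXq + (a^(2^(3*k))*r^(2^k)*s + α*b^(2^k)*s)*hXb
          + (a^(2^(3*k))*r^(2^k)*a^(2^(2*k)) + α*a^(2^(2*k))*b^(2^k))*hrs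
          + a^(2^(3*k))*a^(2^(2*k))*hr2
      have hne : b^(2^k)*b*s ≠ 0 := mul_ne_zero (mul_ne_zero (pow_ne_zero _ hb) hb) hsz
      have h12 := (mul_eq_zero.1 hprod).resolve_right hne
      rw [pow_succ]
      exact h12

omit [Finite K] in
lemma exp_split' (k : ℕ) (z : K) : z ^ (2 ^ (2*k) * (2^k+1)) = z^(2^(3*k)) * z^(2^(2*k)) := by
  rw [← pow_add]; congr 1
  rw [Nat.mul_add, mul_one, ← pow_add]; congr 2; omega

omit [Finite K] in
lemma expand1 (k : ℕ) (α β a b x y : K) :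
    ((x+a) ^ (2 ^ (2*k) * (2^k+1)) + α * (x+a)^(2^(2*k)) * (y+b)^(2^k) + β * (y+b)^(2^k+1))
    + (x ^ (2 ^ (2*k) * (2^k+1)) + α * x^(2^(2*k)) * y^(2^k) + β * y^(2^k+1))
    + (a ^ (2 ^ (2*k) * (2^k+1)) + α * a^(2^(2*k)) * b^(2^k) + β * b^(2^k+1))
    = x^(2^(3*k)) * a^(2^(2*k)) + a^(2^(3*k)) * x^(2^(2*k))
      + α*(x^(2^(2*k)) * b^(2^k) + a^(2^(2*k)) * y^(2^k)) + β*(y^(2^k)*b + b^(2^k)*y) := by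
  have h2 : (2:K) = 0 := CharTwo.two_eq_zero
  simp only [exp_split', pow_succ, frob_add]
  linear_combination h2 * (x^(2^(3*k))*x^(2^(2*k)) + a^(2^(3*k))*a^(2^(2*k))
    + α*(x^(2^(2*k))*y^(2^k) + a^(2^(2*k))*b^(2^k)) + β*(y^(2^k)*y + b^(2^k)*b))

omit [Finite K] in
lemma taniguchi_diff (k : ℕ) (α β : K) (u v : K × K) :
    taniguchi k α β (v + u) + taniguchi k α β v =
      (v.1^(2^(3*k)) * u.1^(2^(2*k)) + u.1^(2^(3*k)) * v.1^(2^(2*k))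
        + α*(v.1^(2^(2*k)) * u.2^(2^k) + u.1^(2^(2*k)) * v.2^(2^k))
        + β*(v.2^(2^k)*u.2 + u.2^(2^k)*v.2)
        + (u.1 ^ (2 ^ (2*k) * (2^k+1)) + α * u.1^(2^(2*k)) * u.2^(2^k) + β * u.2^(2^k+1)),
       u.1*v.2 + u.2*v.1 + u.1*u.2) := by
  have h2 : (2:K) = 0 := CharTwo.two_eq_zero
  unfold taniguchi
  refine Prod.ext ?_ ?_
  · simp only [Prod.fst_add, Prod.snd_add]
    linear_combination (expand1 k α β u.1 u.2 v.1 v.2) -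
      (u.1 ^ (2 ^ (2*k) * (2^k+1)) + α * u.1^(2^(2*k)) * u.2^(2^k) + β * u.2^(2^k+1)) * h2
  · simp only [Prod.fst_add, Prod.snd_add]
    linear_combination v.1*v.2*h2

lemma taniguchi_apn_general (m k : ℕ) (hm : 2 ≤ m) (hk : 0 < k) (hgcd : Nat.gcd k m = 1)
    (hcard : Nat.card K = 2 ^ m)
    (α β : K) (hβ : β ≠ 0) :
    IsAPN (taniguchi k α β) ↔
      ∀ x : K, x ^ (2 ^ k + 1) + α * x + β ≠ 0 := by
  have h2 : (2 : K) = 0 := CharTwo.two_eq_zero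
  have hF0 : taniguchi k α β (0 : K × K) = 0 := by
    unfold taniguchi
    simp [zero_pow (by positivity : (2:ℕ)^(2*k) * (2^k+1) ≠ 0),
      zero_pow (by positivity : (2:ℕ)^k + 1 ≠ 0)]
  have huu : ∀ w : K × K, w + w = 0 := by
    intro w
    refine Prod.ext ?_ ?_ <;> simp only [Prod.fst_add, Prod.snd_add, Prod.fst_zero,
      Prod.snd_zero] <;> exact CharTwo.add_self_eq_zero _
  constructor
  · -- APN → no root
    intro hapn x0 hx0
    have hx0ne : x0 ≠ 0 := by
      rintro rfl
      rw [zero_pow (by positivity : (2:ℕ)^k + 1 ≠ 0), mul_zero, zero_add, zero_add] at hx0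
      exact hβ hx0
    obtain ⟨t0, ht00, ht01⟩ : ∃ t0 : K, t0 ≠ 0 ∧ t0 ≠ 1 := by
      by_contra hcon
      push_neg at hcon
      have hsub : (Set.univ : Set K) ⊆ {0, 1} := by
        intro t _
        rcases eq_or_ne t 0 with h | h
        · simp [h]
        · simp [hcon t h]
      have hle := Set.ncard_le_ncard hsub (Set.toFinite _)
      rw [Set.ncard_univ, hcard] at hle
      have hle2 : ({0, 1} : Set K).ncard ≤ 2 := by
        refine (Set.ncard_insert_le _ _).trans ?_
        simp
      have h4 : 4 ≤ 2^m := by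
        calc (4:ℕ) = 2^2 := by norm_num
        _ ≤ 2^m := Nat.pow_le_pow_right (by norm_num) hm
      omega
    set s : K := t0^(2^k) + t0 with hs
    have hsne : s ≠ 0 := by
      intro h0
      have ht : t0^(2^k) = t0 := by rw [hs] at h0; linear_combination h0 - t0*h2
      rcases fixed01 k m hm hgcd hcard t0 ht with h | h
      exacts [ht00 h, ht01 h]
    set r : K := s^(2^k - 1) with hr
    have hrne : r ≠ 0 := pow_ne_zero _ hsne
    set b : K := r * x0⁻¹ with hb
    have hbne : b ≠ 0 := mul_ne_zero hrne (inv_ne_zero hx0ne)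
    set u : K × K := (1, b) with hu
    set v0 : K × K := (t0, b * t0) with hv0
    have hune : u ≠ 0 := by
      rw [hu]
      intro h
      exact one_ne_zero (α := K) (congrArg Prod.fst h)
    -- the key identity : L1 (v0) = 0
    have hbx : b * x0 = r := by rw [hb]; field_simp
    have hs1k : s^(2^k) = t0^(2^(2*k)) + t0^(2^k) := by
      rw [hs, frob_add, pow_pow_sum, show k+k = 2*k by omega]
    have hs2k : s^(2^(2*k)) = t0^(2^(3*k)) + t0^(2^(2*k)) := by
      rw [hs, frob_add, pow_pow_sum, show k+2*k = 3*k by omega]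
    have hrs : r*s = s^(2^k) := by
      rw [hr, ← pow_succ]; congr 1
      have := Nat.one_le_two_pow (n := k); omega
    have hr2 : r^(2^k)*s^(2^k) = s^(2^(2*k)) := by
      rw [hr, ← pow_mul, ← pow_add]; congr 1
      have h1 : 1 ≤ (2:ℕ)^k := Nat.one_le_two_pow
      have h8 : (2^k-1)*2^k = 2^k*2^k - 2^k := by rw [Nat.sub_mul, one_mul]
      have h9 : (2:ℕ)^k ≤ 2^k*2^k := Nat.le_mul_of_pos_left _ (by positivity)
      have h10 : (2:ℕ)^k*2^k = 2^(2*k) := by rw [← pow_add]; ring_nf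
      omega
    have hq : b^(2^k)*x0^(2^k) = r^(2^k) := by rw [← mul_pow, hbx]
    have hbq2 : b^(2^k)*x0^(2^k)*s^(2^k) = s^(2^(2*k)) := by
      linear_combination s^(2^k)*hq + hr2
    have hroot' : x0^(2^k)*x0 + α*x0 + β = 0 := by
      rw [pow_succ] at hx0; exact hx0
    have key : t0^(2^(3*k)) + t0^(2^(2*k))
        + α*(t0^(2^(2*k)) * b^(2^k) + b^(2^k)*t0^(2^k))
        + β*(b^(2^k)*t0^(2^k)*b + b^(2^k)*(b*t0)) = 0 := by
      have hkey : x0 * (t0^(2^(3*k)) + t0^(2^(2*k))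
          + α*(t0^(2^(2*k)) * b^(2^k) + b^(2^k)*t0^(2^k))
          + β*(b^(2^k)*t0^(2^k)*b + b^(2^k)*(b*t0))) = 0 := by
        linear_combination (-x0) * hs2k + (-(α*b^(2^k)*x0)) * hs1k
          + (-(β*b^(2^k)*b*x0)) * hs + (β*b^(2^k)*s) * hbx + (-x0) * hbq2
          + (β*b^(2^k)) * hrs + (b^(2^k)*s^(2^k)) * hroot'
      exact (mul_eq_zero.1 hkey).resolve_left hx0ne
    -- v0 is in the solution set
    have hv0mem : taniguchi k α β (v0 + u) + taniguchi k α β v0 = taniguchi k α β u := by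
      rw [taniguchi_diff]
      refine Prod.ext ?_ ?_
      · show _ = (taniguchi k α β u).1
        unfold taniguchi
        simp only [hu, hv0]
        linear_combination key
      · show _ = (taniguchi k α β u).2
        unfold taniguchi
        simp only [hu, hv0]
        linear_combination ((1:K)*(b*t0))*h2
    have h0mem : taniguchi k α β (0 + u) + taniguchi k α β 0 = taniguchi k α β u := by
      rw [zero_add, hF0, add_zero]
    have humem : taniguchi k α β (u + u) + taniguchi k α β u = taniguchi k α β u := by
      rw [huu u, hF0, zero_add]
    set S := {x : K × K | taniguchi k α β (x + u) + taniguchi k α β x = taniguchi k α β u}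
      with hS
    have hsub : ({0, u, v0} : Set (K × K)) ⊆ S := by
      intro x hx
      rcases hx with rfl | rfl | rfl
      exacts [h0mem, humem, hv0mem]
    have hd1 : (0 : K × K) ∉ ({u, v0} : Set (K × K)) := by
      intro h
      rcases h with h | h
      · exact hune h.symm
      · apply ht00
        have : (0 : K × K).1 = v0.1 := by rw [h]
        simpa [hv0] using this.symm
    have hd2 : u ≠ v0 := by
      intro h
      apply ht01
      have : u.1 = v0.1 := by rw [h]
      simpa [hu, hv0] using this.symm
    have h3 : ({0, u, v0} : Set (K × K)).ncard = 3 := by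
      rw [Set.ncard_insert_of_notMem hd1 (Set.toFinite _), Set.ncard_pair hd2]
    have hcard3 := Set.ncard_le_ncard hsub (Set.toFinite _)
    rw [h3] at hcard3
    rcases hapn u hune (taniguchi k α β u) with h | h <;> rw [← hS] at h <;> omega
  · -- no root → APN
    intro hroot u hu c
    set S := {x : K × K | taniguchi k α β (x + u) + taniguchi k α β x = c} with hS
    rcases Set.eq_empty_or_nonempty S with hSe | ⟨v0, hv0⟩
    · left; rw [hSe]; exact Set.ncard_empty _
    · right
      have hmem2 : v0 + u ∈ S := by
        show taniguchi k α β (v0 + u + u) + taniguchi k α β (v0 + u) = c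
        rw [add_assoc, huu u, add_zero, add_comm]
        exact hv0
      have hker : ∀ v ∈ S, v = v0 ∨ v = v0 + u := by
        intro v hv
        set d : K × K := v + v0 with hd
        have hvd : v = d + v0 := by
          rw [hd, add_assoc, huu v0, add_zero]
        have e1 : taniguchi k α β (v + u) + taniguchi k α β v
            = taniguchi k α β (v0 + u) + taniguchi k α β v0 := hv.trans hv0.symm
        rw [taniguchi_diff, taniguchi_diff] at e1
        have e1a := congrArg Prod.fst e1
        have e1b := congrArg Prod.snd e1
        simp only at e1a e1b
        have hd1 : d.1 = v.1 + v0.1 := rfl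
        have hd2 : d.2 = v.2 + v0.2 := rfl
        have hL1d : d.1^(2^(3*k)) * u.1^(2^(2*k)) + u.1^(2^(3*k)) * d.1^(2^(2*k))
            + α*(d.1^(2^(2*k)) * u.2^(2^k) + u.1^(2^(2*k)) * d.2^(2^k))
            + β*(d.2^(2^k)*u.2 + u.2^(2^k)*d.2) = 0 := by
          rw [hd1, hd2, frob_add, frob_add, frob_add]
          linear_combination e1a + (v0.1^(2^(3*k)) * u.1^(2^(2*k))
            + u.1^(2^(3*k)) * v0.1^(2^(2*k))
            + α*(v0.1^(2^(2*k)) * u.2^(2^k) + u.1^(2^(2*k)) * v0.2^(2^k))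
            + β*(v0.2^(2^k)*u.2 + u.2^(2^k)*v0.2)) * h2
        have hL2d : u.1*d.2 + u.2*d.1 = 0 := by
          rw [hd1, hd2]
          linear_combination e1b + (u.1*v0.2 + u.2*v0.1) * h2
        have hab : ¬(u.1 = 0 ∧ u.2 = 0) := by
          rintro ⟨ha, hb⟩
          exact hu (Prod.ext ha hb)
        rcases kernel_lemma m k hm hk hgcd hcard α β hβ hroot u.1 u.2 d.1 d.2 hab hL2d hL1d
          with ⟨ha, hb⟩ | ⟨ha, hb⟩
        · left
          rw [hvd, show d = 0 from Prod.ext ha hb, zero_add]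
        · right
          rw [hvd, show d = u from Prod.ext ha hb, add_comm]
      have hSeq : S = {v0, v0 + u} := by
        apply Set.Subset.antisymm
        · intro v hv
          rcases hker v hv with h | h
          · exact Or.inl h
          · exact Or.inr h
        · intro v hv
          rcases hv with rfl | rfl
          exacts [hv0, hmem2]
      rw [hSeq, Set.ncard_pair]
      intro h
      exact hu (by have := (left_eq_add).1 h; exact this)

end


/-- (Taniguchi) For `m ≥ 2`, `k ≥ 1` with `gcd(k,m) = 1`, and `α, β ∈ F_{2^m}` with `β ≠ 0`,
the Taniguchi function `f_{k,α,β}` is APN if and only if the polynomial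
`X^(2^k+1) + αX + β` has no root in `F_{2^m}`. -/
theorem taniguchi_apn_iff (m k : ℕ) (hm : 2 ≤ m) (hk : 0 < k) (hgcd : Nat.gcd k m = 1)
    (α β : GaloisField 2 m) (hβ : β ≠ 0) :
    IsAPN (taniguchi k α β) ↔
      ∀ x : GaloisField 2 m, x ^ (2 ^ k + 1) + α * x + β ≠ 0 := by
  exact taniguchi_apn_general m k hm hk hgcd (GaloisField.card 2 m (by omega)) α β hβ
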